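/- In the group G = ⟨a,b,c | a² = b² = c² = 1, (ac)² = 1, (ab)³ = 1⟩, every element can be represented by a word matching the regular expression [[a]b]([a]cb)*[a][c], i.e., an optional prefix from {ε, b, ab}, followed by finitely many blocks each of the form cb or acb, followed by an optional a, followed by an optional c. -/

import Mathlib

/-- Relations for `G₄ = ⟨a,b,c ∣ a² = b² = c² = 1, (ac)² = 1, (ab)³ = 1⟩`,
with generators `a = of 0`, `b = of 1`, `c = of 2`. -/
def rels4 : Set (FreeGroup (Fin 3)) :=
  {(FreeGroup.of 0) ^ 2, (FreeGroup.of 1) ^ 2, (FreeGroup.of 2) ^ 2,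
   (FreeGroup.of 0 * FreeGroup.of 2) ^ 2, (FreeGroup.of 0 * FreeGroup.of 1) ^ 3}

/-- The generators `a, b, c` of `G₄`. -/
def a : PresentedGroup rels4 := PresentedGroup.of 0
def b : PresentedGroup rels4 := PresentedGroup.of 1
def c : PresentedGroup rels4 := PresentedGroup.of 2


lemma rel_one {r : FreeGroup (Fin 3)} (hr : r ∈ rels4) :
    PresentedGroup.mk rels4 r = 1 :=
  (QuotientGroup.eq_one_iff r).mpr (Subgroup.subset_normalClosure hr)

lemma haa : a * a = 1 := by
  have := rel_one (r := (FreeGroup.of 0)^2) (by simp [rels4])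
  simpa [a, PresentedGroup.of, PresentedGroup.mk, sq] using this

lemma hbb : b * b = 1 := by
  have := rel_one (r := (FreeGroup.of 1)^2) (by simp [rels4])
  simpa [b, PresentedGroup.of, PresentedGroup.mk, sq] using this

lemma hcc : c * c = 1 := by
  have := rel_one (r := (FreeGroup.of 2)^2) (by simp [rels4])
  simpa [c, PresentedGroup.of, PresentedGroup.mk, sq] using this

lemma hacac : a * c * (a * c) = 1 := by
  have := rel_one (r := (FreeGroup.of 0 * FreeGroup.of 2)^2) (by simp [rels4])
  simpa [a, c, PresentedGroup.of, PresentedGroup.mk, sq] using this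

lemma hab3 : a * b * (a * b) * (a * b) = 1 := by
  have := rel_one (r := (FreeGroup.of 0 * FreeGroup.of 1)^3) (by simp [rels4])
  simpa [a, b, PresentedGroup.of, PresentedGroup.mk, pow_succ, mul_assoc] using this

lemma ha_inv : a⁻¹ = a := by rw [inv_eq_iff_mul_eq_one]; exact haa
lemma hb_inv : b⁻¹ = b := by rw [inv_eq_iff_mul_eq_one]; exact hbb
lemma hc_inv : c⁻¹ = c := by rw [inv_eq_iff_mul_eq_one]; exact hcc

lemma hca : c * a = a * c := by
  have h : a * c = (a * c)⁻¹ := by rw [eq_inv_iff_mul_eq_one]; exact hacac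
  rw [h, mul_inv_rev, ha_inv, hc_inv]

lemma hba : b * a = a * b * (a * b) := by
  have h : (a * b)⁻¹ = a * b * (a * b) := by
    rw [inv_eq_iff_mul_eq_one, ← mul_assoc]
    simpa [mul_assoc] using hab3
  rw [← h, mul_inv_rev, ha_inv, hb_inv]

lemma hbab : b * a * b = a * b * a := by
  simp [hba, mul_assoc, hbb]

-- associativity-friendly rewrite forms
lemma haaL (x : PresentedGroup rels4) : a * (a * x) = x := by
  rw [← mul_assoc, haa, one_mul]
lemma hbbL (x : PresentedGroup rels4) : b * (b * x) = x := by
  rw [← mul_assoc, hbb, one_mul]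
lemma hccL (x : PresentedGroup rels4) : c * (c * x) = x := by
  rw [← mul_assoc, hcc, one_mul]
lemma hcaL (x : PresentedGroup rels4) : c * (a * x) = a * (c * x) := by
  rw [← mul_assoc, ← mul_assoc, hca]
lemma hbabL (x : PresentedGroup rels4) : b * (a * (b * x)) = a * (b * (a * x)) := by
  rw [← mul_assoc, ← mul_assoc, ← mul_assoc, ← mul_assoc, hbab]
lemma hbab' : b * (a * b) = a * (b * a) := by
  rw [← mul_assoc, ← mul_assoc, hbab]

/-- Every element of `G₄` is represented by a word matching the regular expression
`[[a]b]([a]cb)*[a][c]`: an optional prefix from `{1, b, ab}`, followed by finitely many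
blocks each equal to `cb` or `acb`, followed by an optional `a`, followed by an optional `c`. -/
theorem stmt8 (g : PresentedGroup rels4) :
    ∃ (pre : Fin 3) (l : List Bool) (d e : Bool),
      g = ![1, b, a * b] pre *
          (l.map (fun s => (if s then a else 1) * c * b)).prod *
          (if d then a else 1) * (if e then c else 1) := by
  set f : Bool → PresentedGroup rels4 := fun s => (if s then a else 1) * c * b with hf
  set N : Fin 3 → List Bool → Bool → Bool → PresentedGroup rels4 :=
    fun pre l d e => ![1, b, a * b] pre * (l.map f).prod *
      (if d then a else 1) * (if e then c else 1) with hN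
  set S : PresentedGroup rels4 → Prop := fun g => ∃ pre l d e, g = N pre l d e with hS
  have S1 : S 1 := ⟨0, [], false, false, by simp [hN]⟩
  have mulc : ∀ g, S g → S (g * c) := by
    rintro g ⟨pre, l, d, e, rfl⟩
    refine ⟨pre, l, d, !e, ?_⟩
    cases e <;> simp [hN, mul_assoc, hcc, hccL]
  have mula : ∀ g, S g → S (g * a) := by
    rintro g ⟨pre, l, d, e, rfl⟩
    refine ⟨pre, l, !d, e, ?_⟩
    cases e <;> cases d <;>
      simp [hN, mul_assoc, haa, haaL, hca, hcaL, hcc, hccL]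
  have mulb : ∀ g, S g → S (g * b) := by
    rintro g ⟨pre, l, d, e, rfl⟩
    cases e with
    | true =>
      refine ⟨pre, l ++ [d], false, false, ?_⟩
      cases d <;> simp [hN, hf, mul_assoc]
    | false =>
      rcases l.eq_nil_or_concat with rfl | ⟨l', s, rfl⟩
      · cases d with
        | false =>
          fin_cases pre
          · exact ⟨1, [], false, false, by simp [hN]⟩
          · exact ⟨0, [], false, false, by simp [hN, hbb]⟩
          · exact ⟨0, [], true, false, by simp [hN, mul_assoc, hbb, hbbL]⟩
        | true =>
          fin_cases pre
          · exact ⟨2, [], false, false, by simp [hN]⟩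
          · exact ⟨2, [], true, false, by simp [hN, mul_assoc, hbab', hbab, hbb, hbbL]⟩
          · exact ⟨1, [], true, false, by
              simp [hN, mul_assoc]
              rw [hba]
              simp [mul_assoc]⟩
      · cases d with
        | false =>
          refine ⟨pre, l', s, true, ?_⟩
          cases s <;> simp [hN, hf, mul_assoc, hbb, hbbL]
        | true =>
          refine ⟨pre, l' ++ [!s], true, false, ?_⟩
          cases s <;>
            simp [hN, hf, mul_assoc, hbbL, haaL, hcaL, hbabL, hbab']
  have key : ∀ w : FreeGroup (Fin 3),
      ∀ h, S h → S (h * PresentedGroup.mk rels4 w) := by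
    intro w
    induction w using FreeGroup.induction_on with
    | C1 => intro h hh; simpa using hh
    | of x =>
      intro h hh
      fin_cases x
      · exact mula h hh
      · exact mulb h hh
      · exact mulc h hh
    | inv_of x ih =>
      intro h hh
      have gi : (PresentedGroup.mk rels4 (FreeGroup.of x))⁻¹
          = PresentedGroup.mk rels4 (FreeGroup.of x) := by
        fin_cases x
        exacts [ha_inv, hb_inv, hc_inv]
      show S (h * ((PresentedGroup.mk rels4) (FreeGroup.of x))⁻¹)
      rw [gi]
      fin_cases x
      · exact mula h hh
      · exact mulb h hh
      · exact mulc h hh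
    | mul x y ihx ihy =>
      intro h hh
      rw [map_mul, ← mul_assoc]
      exact ihy _ (ihx h hh)
  obtain ⟨w, rfl⟩ := PresentedGroup.mk_surjective rels4 g
  have := key w 1 S1
  simpa [hS, hN] using this
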